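/- For every field $k$, the element $X^2 - Y^2 Z$ is irreducible in the formal power series ring $k[[X,Y,Z]]$. -/

import Mathlib

open MvPowerSeries Finsupp Finset

private lemma fin3_repr (d : Fin 3 →₀ ℕ) :
    d = Finsupp.single 0 (d 0) + Finsupp.single 1 (d 1) + Finsupp.single 2 (d 2) := by
  ext i
  fin_cases i <;> simp [Finsupp.single_apply]

/-- For every field `k`, the element `X^2 - Y^2 Z` is irreducible in the formal power
series ring `k[[X,Y,Z]]`. Here `X 0, X 1, X 2` play the roles of `X, Y, Z`. -/
theorem pinchPoint_powerSeries_irreducible (k : Type*) [Field k] :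
    Irreducible
      ((MvPowerSeries.X 0) ^ 2 - (MvPowerSeries.X 1) ^ 2 * MvPowerSeries.X 2 :
        MvPowerSeries (Fin 3) k) := by
  set e1 : Fin 3 →₀ ℕ := Finsupp.single 0 2 with he1
  set e2 : Fin 3 →₀ ℕ := Finsupp.single 1 2 + Finsupp.single 2 1 with he2
  have hf : ((MvPowerSeries.X 0) ^ 2 - (MvPowerSeries.X 1) ^ 2 * MvPowerSeries.X 2 :
      MvPowerSeries (Fin 3) k) = monomial e1 1 - monomial e2 1 := by
    rw [X_pow_eq, X_pow_eq, show (MvPowerSeries.X 2 : MvPowerSeries (Fin 3) k)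
      = monomial (Finsupp.single 2 1) 1 by rw [← X_pow_eq, pow_one],
      monomial_mul_monomial, one_mul]
  have hne12 : e1 ≠ e2 := by
    intro h
    have := DFunLike.congr_fun h 0
    simp [he1, he2, Finsupp.single_apply] at this
  constructor
  · rw [isUnit_iff_constantCoeff]
    simp [map_sub, map_mul, map_pow, constantCoeff_X]
  · intro a b hab
    by_contra hcon
    push_neg at hcon
    obtain ⟨ha, hb⟩ := hcon
    set A : (Fin 3 →₀ ℕ) → k := fun m => coeff m a with hA
    set B : (Fin 3 →₀ ℕ) → k := fun m => coeff m b with hB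
    have hA0 : A 0 = 0 := by
      by_contra h
      exact ha (isUnit_iff_constantCoeff.mpr (isUnit_iff_ne_zero.mpr h))
    have hB0 : B 0 = 0 := by
      by_contra h
      exact hb (isUnit_iff_constantCoeff.mpr (isUnit_iff_ne_zero.mpr h))
    have key : ∀ m : Fin 3 →₀ ℕ, (∑ p ∈ Finset.HasAntidiagonal.antidiagonal m, A p.1 * B p.2)
        = (if m = e1 then (1:k) else 0) - (if m = e2 then 1 else 0) := by
      intro m
      rw [← MvPowerSeries.coeff_mul, ← hab, hf, map_sub, coeff_monomial, coeff_monomial]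
    -- value extraction
    have hval : ∀ (m : Fin 3 →₀ ℕ) (p : (Fin 3 →₀ ℕ) × (Fin 3 →₀ ℕ)),
        p ∈ Finset.HasAntidiagonal.antidiagonal m → ∀ i, p.1 i + p.2 i = m i := by
      intro m p hp i
      rw [Finset.HasAntidiagonal.mem_antidiagonal] at hp
      rw [← hp]
      simp
    set x1 : Fin 3 →₀ ℕ := Finsupp.single 0 1 with hx1
    set y1 : Fin 3 →₀ ℕ := Finsupp.single 1 1 with hy1
    set z1 : Fin 3 →₀ ℕ := Finsupp.single 2 1 with hz1
    -- coefficient at X^2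
    have hXX : A x1 * B x1 = 1 := by
      have h1 := key e1
      rw [if_pos rfl, if_neg hne12, sub_zero] at h1
      rw [← h1]
      symm
      apply Finset.sum_eq_single_of_mem (x1, x1)
      · rw [Finset.HasAntidiagonal.mem_antidiagonal, hx1, he1, ← Finsupp.single_add]
      · rintro ⟨u, v⟩ hp hne
        have h0 := hval _ _ hp 0
        have h1' := hval _ _ hp 1
        have h2' := hval _ _ hp 2
        simp only [he1, Finsupp.single_apply] at h0 h1' h2'
        norm_num [Fin.ext_iff] at h0 h1' h2'
        have hu1 : u 1 = 0 := by omega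
        have hu2 : u 2 = 0 := by omega
        have hv1 : v 1 = 0 := by omega
        have hv2 : v 2 = 0 := by omega
        have hcase : u 0 = 0 ∨ u 0 = 1 ∨ u 0 = 2 := by omega
        rcases hcase with h | h | h
        · have : u = 0 := by
            rw [fin3_repr u, h, hu1, hu2]; simp
          simp [this, hA0]
        · exfalso
          apply hne
          have hv0 : v 0 = 1 := by omega
          have : u = x1 := by rw [fin3_repr u, h, hu1, hu2, hx1]; simp
          have hv : v = x1 := by rw [fin3_repr v, hv0, hv1, hv2, hx1]; simp
          simp [this, hv]
        · have hv0 : v 0 = 0 := by omega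
          have : v = 0 := by rw [fin3_repr v, hv0, hv1, hv2]; simp
          simp [this, hB0]
    have hAx : A x1 ≠ 0 := left_ne_zero_of_mul_eq_one hXX
    have hBx : B x1 ≠ 0 := right_ne_zero_of_mul_eq_one hXX
    -- squares of Y and Z
    have hsq : ∀ s : Fin 3, A (Finsupp.single s 1) * B (Finsupp.single s 1) = 0 ∨
        Finsupp.single s 2 = e1 := by
      intro s
      by_cases hse : Finsupp.single s 2 = e1
      · right; exact hse
      left
      have hne2 : Finsupp.single s 2 ≠ e2 := by
        intro h
        have := DFunLike.congr_fun h s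
        have h2' := DFunLike.congr_fun h 2
        fin_cases s <;>
          first
          | (norm_num [he2, hz1, Finsupp.single_apply, Fin.ext_iff] at this; done)
          | norm_num [he2, hz1, Finsupp.single_apply, Fin.ext_iff] at h2'
      have h1 := key (Finsupp.single s 2)
      rw [if_neg hse, if_neg hne2, sub_zero] at h1
      rw [← h1]
      symm
      apply Finset.sum_eq_single_of_mem (Finsupp.single s 1, Finsupp.single s 1)
      · rw [Finset.HasAntidiagonal.mem_antidiagonal, ← Finsupp.single_add]
      · rintro ⟨u, v⟩ hp hne
        have hv' : ∀ i, u i + v i = Finsupp.single s 2 i := hval _ _ hp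
        have hu0 : ∀ i, i ≠ s → u i = 0 := by
          intro i hi
          have := hv' i
          rw [Finsupp.single_apply_eq_zero.mpr (fun h => absurd h hi)] at this
          omega
        have hv0 : ∀ i, i ≠ s → v i = 0 := by
          intro i hi
          have := hv' i
          rw [Finsupp.single_apply_eq_zero.mpr (fun h => absurd h hi)] at this
          omega
        have hs' := hv' s
        rw [Finsupp.single_apply, if_pos rfl] at hs'
        have hurepr : u = Finsupp.single s (u s) := by
          ext i
          by_cases hi : i = s
          · subst hi; simp [Finsupp.single_apply]
          · rw [hu0 i hi, Finsupp.single_apply_eq_zero.mpr (fun h => absurd h hi)]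
        have hvrepr : v = Finsupp.single s (v s) := by
          ext i
          by_cases hi : i = s
          · subst hi; simp [Finsupp.single_apply]
          · rw [hv0 i hi, Finsupp.single_apply_eq_zero.mpr (fun h => absurd h hi)]
        have hcase : u s = 0 ∨ u s = 1 ∨ u s = 2 := by omega
        rcases hcase with h | h | h
        · have : u = 0 := by rw [hurepr, h, Finsupp.single_zero]
          simp [this, hA0]
        · exfalso
          apply hne
          have hvs : v s = 1 := by omega
          rw [Prod.mk.injEq]
          constructor
          · rw [hurepr, h]
          · rw [hvrepr, hvs]
        · have hvs : v s = 0 := by omega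
          have : v = 0 := by rw [hvrepr, hvs, Finsupp.single_zero]
          simp [this, hB0]
    have hy1e1 : (Finsupp.single 1 2 : Fin 3 →₀ ℕ) ≠ e1 := by
      intro h
      have := DFunLike.congr_fun h 1
      norm_num [he1, Finsupp.single_apply, Fin.ext_iff] at this
    have hz1e1 : (Finsupp.single 2 2 : Fin 3 →₀ ℕ) ≠ e1 := by
      intro h
      have := DFunLike.congr_fun h 2
      norm_num [he1, Finsupp.single_apply, Fin.ext_iff] at this
    have hYY : A y1 * B y1 = 0 := (hsq 1).resolve_right hy1e1
    have hZZ : A z1 * B z1 = 0 := (hsq 2).resolve_right hz1e1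
    -- the mixed coefficients XY and XZ
    have hmix : ∀ s : Fin 3, s ≠ 0 →
        A (Finsupp.single s 1) * B (Finsupp.single s 1) = 0 →
        A (Finsupp.single s 1) = 0 ∧ B (Finsupp.single s 1) = 0 := by
      intro s hs hprod
      set w : Fin 3 →₀ ℕ := Finsupp.single s 1 with hw
      set m : Fin 3 →₀ ℕ := x1 + w with hm
      have hm0 : m 0 = 1 := by
        simp [hm, hx1, hw, Finsupp.single_apply, hs, hs.symm]
      have hms : m s = 1 := by
        simp [hm, hx1, hw, Finsupp.single_apply, hs, hs.symm]
      have hmo : ∀ i, i ≠ 0 → i ≠ s → m i = 0 := by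
        intro i hi0 his
        simp only [hm, hx1, hw, Finsupp.add_apply, Finsupp.single_apply]
        rw [if_neg (fun h => hi0 h.symm), if_neg (fun h => his h.symm)]
        rfl
      have hmne1 : m ≠ e1 := by
        intro h
        have := DFunLike.congr_fun h 0
        rw [hm0] at this
        norm_num [he1, Finsupp.single_apply] at this
      have hmne2 : m ≠ e2 := by
        intro h
        have := DFunLike.congr_fun h 0
        rw [hm0] at this
        norm_num [he2, hz1, Finsupp.single_apply, Fin.ext_iff] at this
      have hkey := key m
      rw [if_neg hmne1, if_neg hmne2, sub_zero] at hkey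
      -- classification of antidiagonal elements of m
      have hclass : ∀ u v : Fin 3 →₀ ℕ, (u, v) ∈ Finset.HasAntidiagonal.antidiagonal m →
          (u = 0 ∧ v = m) ∨ (u = x1 ∧ v = w) ∨ (u = w ∧ v = x1) ∨ (u = m ∧ v = 0) := by
        intro u v hp
        have hv' : ∀ i, u i + v i = m i := hval _ _ hp
        have huo : ∀ i, i ≠ 0 → i ≠ s → u i = 0 := by
          intro i h1 h2; have := hv' i; rw [hmo i h1 h2] at this; omega
        have hvo : ∀ i, i ≠ 0 → i ≠ s → v i = 0 := by
          intro i h1 h2; have := hv' i; rw [hmo i h1 h2] at this; omega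
        have h0' := hv' 0; rw [hm0] at h0'
        have hs' := hv' s; rw [hms] at hs'
        have hurepr : u = Finsupp.single 0 (u 0) + Finsupp.single s (u s) := by
          ext i
          rcases eq_or_ne i 0 with hi | hi
          · subst hi
            simp [Finsupp.single_apply, hs, hs.symm]
          rcases eq_or_ne i s with hi2 | hi2
          · subst hi2
            simp [Finsupp.single_apply]
            exact fun h => absurd h.symm hi
          · simp only [huo i hi hi2, Finsupp.add_apply, Finsupp.single_apply]
            rw [if_neg (fun h => hi h.symm), if_neg (fun h => hi2 h.symm)]
            rfl
        have hvrepr : v = Finsupp.single 0 (v 0) + Finsupp.single s (v s) := by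
          ext i
          rcases eq_or_ne i 0 with hi | hi
          · subst hi
            simp [Finsupp.single_apply, hs, hs.symm]
          rcases eq_or_ne i s with hi2 | hi2
          · subst hi2
            simp [Finsupp.single_apply]
            exact fun h => absurd h.symm hi
          · simp only [hvo i hi hi2, Finsupp.add_apply, Finsupp.single_apply]
            rw [if_neg (fun h => hi h.symm), if_neg (fun h => hi2 h.symm)]
            rfl
        have hmrepr : m = Finsupp.single 0 1 + Finsupp.single s 1 := by
          rw [hm, hx1, hw]
        have hc0 : u 0 = 0 ∨ u 0 = 1 := by omega
        have hcs : u s = 0 ∨ u s = 1 := by omega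
        rcases hc0 with h0u | h0u <;> rcases hcs with hsu | hsu
        · left
          constructor
          · rw [hurepr, h0u, hsu]; simp
          · rw [hvrepr, hmrepr]
            have : v 0 = 1 := by omega
            have h2 : v s = 1 := by omega
            rw [this, h2]
        · right; right; left
          constructor
          · rw [hurepr, h0u, hsu, hw]; simp
          · rw [hvrepr, hx1]
            have : v 0 = 1 := by omega
            have h2 : v s = 0 := by omega
            rw [this, h2]; simp
        · right; left
          constructor
          · rw [hurepr, h0u, hsu, hx1]; simp
          · rw [hvrepr, hw]
            have : v 0 = 0 := by omega
            have h2 : v s = 1 := by omega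
            rw [this, h2]; simp
        · right; right; right
          constructor
          · rw [hurepr, h0u, hsu, hmrepr]
          · rw [hvrepr]
            have : v 0 = 0 := by omega
            have h2 : v s = 0 := by omega
            rw [this, h2]; simp
      rcases mul_eq_zero.mp hprod with hAw | hBw
      · refine ⟨hAw, ?_⟩
        have hsum : A x1 * B w = 0 := by
          rw [← hkey]
          symm
          apply Finset.sum_eq_single_of_mem (x1, w)
          · rw [Finset.HasAntidiagonal.mem_antidiagonal, hm]
          · rintro ⟨u, v⟩ hp hne
            rcases hclass u v hp with ⟨h1, h2⟩ | ⟨h1, h2⟩ | ⟨h1, h2⟩ | ⟨h1, h2⟩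
            · simp [h1, hA0]
            · exact absurd (by rw [h1, h2]) hne
            · simp [h1, hAw]
            · simp [h2, hB0]
        exact (mul_eq_zero.mp hsum).resolve_left hAx
      · refine ⟨?_, hBw⟩
        have hsum : A w * B x1 = 0 := by
          rw [← hkey]
          symm
          apply Finset.sum_eq_single_of_mem (w, x1)
          · rw [Finset.HasAntidiagonal.mem_antidiagonal, hm, add_comm]
          · rintro ⟨u, v⟩ hp hne
            rcases hclass u v hp with ⟨h1, h2⟩ | ⟨h1, h2⟩ | ⟨h1, h2⟩ | ⟨h1, h2⟩
            · simp [h1, hA0]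
            · simp [h2, hBw]
            · exact absurd (by rw [h1, h2]) hne
            · simp [h2, hB0]
        exact (mul_eq_zero.mp hsum).resolve_right hBx
    obtain ⟨hAy, hBy⟩ := hmix 1 (by decide) hYY
    obtain ⟨hAz, hBz⟩ := hmix 2 (by decide) hZZ
    -- final contradiction at the coefficient of Y^2 Z
    have hkey := key e2
    rw [if_neg (Ne.symm hne12), if_pos rfl, zero_sub] at hkey
    have hzero : (∑ p ∈ Finset.HasAntidiagonal.antidiagonal e2, A p.1 * B p.2) = 0 := by
      apply Finset.sum_eq_zero
      rintro ⟨u, v⟩ hp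
      have hv' : ∀ i, u i + v i = e2 i := hval _ _ hp
      have h0' := hv' 0
      have h1' := hv' 1
      have h2' := hv' 2
      norm_num [he2, hz1, Finsupp.single_apply, Fin.ext_iff] at h0' h1' h2'
      have hurepr : u = Finsupp.single 1 (u 1) + Finsupp.single 2 (u 2) := by
        ext i
        fin_cases i <;> simp [Finsupp.single_apply] <;> omega
      have hvrepr : v = Finsupp.single 1 (v 1) + Finsupp.single 2 (v 2) := by
        ext i
        fin_cases i <;> simp [Finsupp.single_apply] <;> omega
      have hc1 : u 1 = 0 ∨ u 1 = 1 ∨ u 1 = 2 := by omega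
      have hc2 : u 2 = 0 ∨ u 2 = 1 := by omega
      rcases hc1 with h1u | h1u <;> [skip; rcases h1u with h1u | h1u] <;>
        rcases hc2 with h2u | h2u
      · have : u = 0 := by rw [hurepr, h1u, h2u]; simp
        simp [this, hA0]
      · have : u = z1 := by rw [hurepr, h1u, h2u, hz1]; simp
        simp [this, hAz, hz1]
      · have : u = y1 := by rw [hurepr, h1u, h2u, hy1]; simp
        simp [this, hAy, hy1]
      · have : v = y1 := by
          rw [hvrepr, hy1]
          have e1' : v 1 = 1 := by omega
          have e2' : v 2 = 0 := by omega
          rw [e1', e2']; simp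
        simp [this, hBy, hy1]
      · have : v = z1 := by
          rw [hvrepr, hz1]
          have e1' : v 1 = 0 := by omega
          have e2' : v 2 = 1 := by omega
          rw [e1', e2']; simp
        simp [this, hBz, hz1]
      · have : v = 0 := by
          rw [hvrepr]
          have e1' : v 1 = 0 := by omega
          have e2' : v 2 = 0 := by omega
          rw [e1', e2']; simp
        simp [this, hB0]
    rw [hzero] at hkey
    norm_num at hkey
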